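/- Let F be a field of characteristic zero, n ≥ 1, and let ⪯ be a monomial order on exponent vectors in ℕ^n (a linear order compatible with addition that is a well-order). For every nonzero polynomial f ∈ F[x₁, …, xₙ], the dimension over F of the partial-derivative space of f is at least the cone-size of the leading monomial of f with respect to ⪯, i.e., dim_F span_F{∂^e f : e ∈ ℕ^n} ≥ ∏_{i=1}^{n} (mᵢ + 1), where m is the ⪯-largest exponent vector in the support of f. -/

import Mathlib

open scoped MonomialOrder
open MvPolynomial

noncomputable def iterPDeriv (F : Type*) [CommSemiring F] (n : ℕ) (e : Fin n → ℕ) :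
    Module.End F (MvPolynomial (Fin n) F) :=
  (List.ofFn fun i : Fin n =>
    ((MvPolynomial.pderiv i).toLinearMap : Module.End F (MvPolynomial (Fin n) F)) ^ (e i)).prod

section Aux
variable {F : Type*} [Field F] {n : ℕ}

theorem coeff_pderiv' (i : Fin n) (d : Fin n →₀ ℕ) (f : MvPolynomial (Fin n) F) :
    coeff d (pderiv i f) = (d i + 1) * coeff (d + Finsupp.single i 1) f := by
  induction f using MvPolynomial.induction_on' with
  | monomial s a =>
    rw [pderiv_monomial]
    rcases eq_or_ne s (d + Finsupp.single i 1) with h | h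
    · subst h
      simp [coeff_monomial, Finsupp.ext_iff, mul_comm]
    · rw [coeff_monomial, coeff_monomial, if_neg h, mul_zero]
      rcases eq_or_ne (s i) 0 with h0 | h0
      · simp [coeff_monomial, h0]
      · rw [if_neg]
        intro hd
        apply h
        ext j
        rw [← hd]
        simp only [Finsupp.coe_add, Finsupp.coe_tsub, Pi.add_apply, Pi.sub_apply,
          Finsupp.single_apply]
        rcases eq_or_ne i j with rfl | hij
        · simp; omega
        · simp [hij, Ne.symm hij]
  | add p q hp hq => simp [hp, hq, mul_add]

/-- `g` shifts coefficients by `t`, up to positive integer factors. -/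
def Good (g : Module.End F (MvPolynomial (Fin n) F)) (t : Fin n →₀ ℕ) : Prop :=
  ∀ d : Fin n →₀ ℕ, ∃ k : ℕ, 0 < k ∧
    ∀ f : MvPolynomial (Fin n) F, coeff d (g f) = (k : F) * coeff (d + t) f

theorem good_one : Good (1 : Module.End F (MvPolynomial (Fin n) F)) 0 :=
  fun d => ⟨1, one_pos, fun f => by simp⟩

theorem good_pderiv (i : Fin n) :
    Good ((pderiv i).toLinearMap : Module.End F (MvPolynomial (Fin n) F))
      (Finsupp.single i 1) :=
  fun d => ⟨d i + 1, Nat.succ_pos _, fun f => by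
    simpa using coeff_pderiv' i d f⟩

theorem good_mul {a b : Module.End F (MvPolynomial (Fin n) F)} {s t : Fin n →₀ ℕ}
    (ha : Good a s) (hb : Good b t) : Good (a * b) (s + t) := by
  intro d
  obtain ⟨k1, hk1, h1⟩ := ha d
  obtain ⟨k2, hk2, h2⟩ := hb (d + s)
  exact ⟨k1 * k2, Nat.mul_pos hk1 hk2, fun f => by
    simp [Module.End.mul_apply, h1, h2, add_assoc, mul_assoc]⟩

theorem good_pow (i : Fin n) (k : ℕ) :
    Good (((pderiv i).toLinearMap : Module.End F (MvPolynomial (Fin n) F)) ^ k)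
      (Finsupp.single i k) := by
  induction k with
  | zero => simpa using (good_one : Good (1 : Module.End F (MvPolynomial (Fin n) F)) 0)
  | succ k ih =>
    have h := good_mul (good_pderiv (F := F) i) ih
    rw [pow_succ']
    have hs : Finsupp.single i (k + 1) = Finsupp.single i 1 + Finsupp.single i k := by
      rw [← Finsupp.single_add]; rw [Nat.add_comm]
    rw [hs]
    exact h

theorem good_prod : ∀ (l : List (Module.End F (MvPolynomial (Fin n) F)))
    (ts : List (Fin n →₀ ℕ)), List.Forall₂ Good l ts → Good l.prod ts.sum
  | [], [], _ => by simpa using (good_one : Good (1 : Module.End F (MvPolynomial (Fin n) F)) 0)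
  | a :: l, t :: ts, h => by
    rw [List.forall₂_cons] at h
    simpa using good_mul h.1 (good_prod l ts h.2)

theorem good_iterPDeriv (e : Fin n →₀ ℕ) :
    Good (iterPDeriv F n ⇑e) e := by
  have h := good_prod (List.ofFn fun i : Fin n =>
      ((pderiv i).toLinearMap : Module.End F (MvPolynomial (Fin n) F)) ^ (e i))
    (List.ofFn fun i : Fin n => Finsupp.single i (e i))
    (by
      rw [List.forall₂_iff_get]
      refine ⟨by simp, fun i h1 h2 => ?_⟩
      simp only [List.get_ofFn]
      exact good_pow _ _)
  rw [List.sum_ofFn, Finsupp.univ_sum_single] at h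
  exact h

end Aux

theorem partial_derivative_space_dim_ge_cone_size_of_leading_monomial
    (F : Type*) [Field F] [CharZero F] (n : ℕ) (hn : 1 ≤ n)
    (mo : MonomialOrder (Fin n))
    (f : MvPolynomial (Fin n) F) (hf : f ≠ 0)
    (m : Fin n →₀ ℕ) (hmem : m ∈ f.support)
    (hmax : ∀ e ∈ f.support, e ≼[mo] m) :
    ((∏ i, (m i + 1) : ℕ) : Cardinal) ≤
      Module.rank F
        (Submodule.span F {g : MvPolynomial (Fin n) F |
          ∃ e : Fin n → ℕ, g = iterPDeriv F n e f}) := by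
  classical
  set p := Submodule.span F {g : MvPolynomial (Fin n) F |
      ∃ e : Fin n → ℕ, g = iterPDeriv F n e f}
  -- index type: Finsupps ≤ m
  set ι := ↥(Finset.Iic m)
  have hle : ∀ e : ι, (e : Fin n →₀ ℕ) ≤ m := fun e => Finset.mem_Iic.mp e.2
  -- the family of derivatives
  set g : ι → MvPolynomial (Fin n) F := fun e => iterPDeriv F n ⇑(e : Fin n →₀ ℕ) f with hg
  have hgmem : ∀ e : ι, g e ∈ p := fun e =>
    Submodule.subset_span ⟨⇑(e : Fin n →₀ ℕ), rfl⟩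
  -- key facts about each g e
  have key : ∀ e : ι, ∃ k : ℕ, 0 < k ∧
      MvPolynomial.coeff (m - (e : Fin n →₀ ℕ)) (g e) = (k : F) * MvPolynomial.coeff m f :=
    by
    intro e
    obtain ⟨k, hk, hcoeff⟩ := good_iterPDeriv (F := F) (e : Fin n →₀ ℕ) (m - (e : Fin n →₀ ℕ))
    refine ⟨k, hk, ?_⟩
    rw [hcoeff, tsub_add_cancel_of_le (hle e)]
  have hlead : ∀ e : ι, MvPolynomial.coeff (m - (e : Fin n →₀ ℕ)) (g e) ≠ 0 := by
    intro e
    obtain ⟨k, hk, hc⟩ := key e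
    rw [hc]
    have : MvPolynomial.coeff m f ≠ 0 := MvPolynomial.mem_support_iff.mp hmem
    exact mul_ne_zero (by exact_mod_cast hk.ne') this
  have hsupp : ∀ (e : ι) (c : Fin n →₀ ℕ), c ∈ (g e).support →
      c ≼[mo] (m - (e : Fin n →₀ ℕ)) := by
    intro e c hc
    obtain ⟨k, hk, hcoeff⟩ := good_iterPDeriv (F := F) (e : Fin n →₀ ℕ) c
    have hne : MvPolynomial.coeff (c + (e : Fin n →₀ ℕ)) f ≠ 0 := by
      intro h0
      have := MvPolynomial.mem_support_iff.mp hc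
      rw [hcoeff, h0, mul_zero] at this
      exact this rfl
    have h1 : (c + (e : Fin n →₀ ℕ)) ≼[mo] m :=
      hmax _ (MvPolynomial.mem_support_iff.mpr hne)
    have h3 : mo.toSyn (c + (e : Fin n →₀ ℕ))
        ≤ mo.toSyn ((m - (e : Fin n →₀ ℕ)) + (e : Fin n →₀ ℕ)) := by
      rw [tsub_add_cancel_of_le (hle e)]; exact h1
    rw [map_add, map_add] at h3
    exact le_of_add_le_add_right h3
  -- injectivity of e ↦ m - e
  have hinj : ∀ e₁ e₂ : ι, m - (e₁ : Fin n →₀ ℕ) = m - (e₂ : Fin n →₀ ℕ) → e₁ = e₂ := by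
    intro e₁ e₂ h
    have h1 := tsub_add_cancel_of_le (hle e₁)
    have h2 := tsub_add_cancel_of_le (hle e₂)
    apply Subtype.ext
    ext j
    have := congrArg (fun x : Fin n →₀ ℕ => x j) h
    have a1 := congrArg (fun x : Fin n →₀ ℕ => x j) h1
    have a2 := congrArg (fun x : Fin n →₀ ℕ => x j) h2
    simp only [Finsupp.add_apply] at a1 a2 this
    omega
  -- linear independence
  have hli : LinearIndependent F g := by
    rw [Fintype.linearIndependent_iff]
    intro c hc
    by_contra hne
    push_neg at hne
    obtain ⟨i0, hi0⟩ := hne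
    set T : Finset ι := Finset.univ.filter (fun i => c i ≠ 0) with hT
    have hTne : T.Nonempty := ⟨i0, by simp [hT, hi0]⟩
    obtain ⟨j0, hj0T, hj0max⟩ := T.exists_max_image
      (fun i => mo.toSyn (m - (i : Fin n →₀ ℕ))) hTne
    have hcj0 : c j0 ≠ 0 := (Finset.mem_filter.mp hj0T).2
    set d0 := m - (j0 : Fin n →₀ ℕ)
    have hzero := congrArg (MvPolynomial.coeff d0) hc
    rw [MvPolynomial.coeff_zero] at hzero
    have hsum : MvPolynomial.coeff d0 (∑ i, c i • g i)
        = ∑ i, c i * MvPolynomial.coeff d0 (g i) := by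
      rw [MvPolynomial.coeff_sum]
      simp [MvPolynomial.coeff_smul, smul_eq_mul]
    rw [hsum] at hzero
    have honly : ∀ i : ι, i ≠ j0 → c i * MvPolynomial.coeff d0 (g i) = 0 := by
      intro i hij
      rcases eq_or_ne (c i) 0 with h | h
      · rw [h, zero_mul]
      · have hiT : i ∈ T := Finset.mem_filter.mpr ⟨Finset.mem_univ _, h⟩
        rcases eq_or_ne (MvPolynomial.coeff d0 (g i)) 0 with h0 | h0
        · rw [h0, mul_zero]
        · exfalso
          have hd0 : d0 ∈ (g i).support := MvPolynomial.mem_support_iff.mpr h0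
          have hle1 := hsupp i d0 hd0
          have hle2 := hj0max i hiT
          have : mo.toSyn (m - (i : Fin n →₀ ℕ)) = mo.toSyn d0 := le_antisymm hle2 hle1
          have := mo.toSyn.injective this
          exact hij (hinj i j0 this)
    rw [Finset.sum_eq_single j0 (fun i _ hij => honly i hij) (by simp)] at hzero
    exact hcj0 (by
      rcases mul_eq_zero.mp hzero with h | h
      · exact h
      · exact absurd h (hlead j0))
  -- conclude via cardinality
  have hli' : LinearIndependent F (fun e : ι => (⟨g e, hgmem e⟩ : p)) := by
    apply LinearIndependent.of_comp p.subtype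
    convert hli
    rfl
  have hcard := hli'.cardinal_lift_le_rank
  have hmk : Cardinal.mk ι = (∏ i, (m i + 1) : ℕ) := by
    rw [Cardinal.mk_fintype]
    congr 1
    rw [Fintype.card_coe, Finsupp.card_Iic]
    have : ∀ i ∈ m.support, (Finset.Iic (m i)).card = m i + 1 := by
      intro i _
      simp [Nat.card_Iic]
    rw [Finset.prod_congr rfl this]
    rw [← Finset.prod_subset (Finset.subset_univ m.support)]
    intro x _ hx
    simp only [Finsupp.mem_support_iff, not_not] at hx
    rw [hx]
    rfl
  rw [hmk] at hcard
  rwa [Cardinal.lift_natCast, Cardinal.lift_uzero] at hcard
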